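/- Let x_1,…,x_d be square-integrable real random variables (not necessarily independent) and define the game val(u) = Var(Σ_{j∈u} x_j) for u ⊆ {1,…,d}, with val(∅) = 0. Then the Shapley value of player j equals φ_j = Cov(x_j, S), where S = Σ_{k=1}^{d} x_k. -/

import Mathlib

open Finset MeasureTheory ProbabilityTheory

/-- The Shapley value of player `j` for the cooperative game `val` on subsets of `Fin d`. -/
noncomputable def shapley {d : ℕ} (val : Finset (Fin d) → ℝ) (j : Fin d) : ℝ :=
  (d : ℝ)⁻¹ * ∑ u ∈ (Finset.univ.erase j).powerset,
    ((Nat.choose (d - 1) u.card : ℝ))⁻¹ * (val (insert j u) - val u)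

/-- The covariance of `f` and `g` under `μ`. -/
noncomputable def covar {α : Type*} [MeasurableSpace α] (μ : Measure α)
    (f g : α → ℝ) : ℝ :=
  ∫ ω, (f ω - ∫ ω', f ω' ∂μ) * (g ω - ∫ ω', g ω' ∂μ) ∂μ

section Aux

set_option linter.unusedSectionVars false

variable {Ω : Type*} [MeasurableSpace Ω] {μ : Measure Ω} [IsProbabilityMeasure μ]

lemma int_mul {f g : Ω → ℝ} (hf : MemLp f 2 μ) (hg : MemLp g 2 μ) :
    Integrable (fun ω => f ω * g ω) μ := by
  have h : MemLp (f • g) 1 μ := by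
    haveI : ENNReal.HolderTriple 2 2 1 := ⟨by simp [ENNReal.inv_two_add_inv_two]⟩
    exact hg.smul hf
  exact memLp_one_iff_integrable.mp h

lemma covar_eq {f g : Ω → ℝ} (hf : MemLp f 2 μ) (hg : MemLp g 2 μ) :
    covar μ f g = (∫ ω, f ω * g ω ∂μ) - (∫ ω, f ω ∂μ) * (∫ ω, g ω ∂μ) := by
  have hf1 : Integrable f μ := hf.integrable one_le_two
  have hg1 : Integrable g μ := hg.integrable one_le_two
  have hfg := int_mul hf hg
  set a := ∫ ω, f ω ∂μ
  set b := ∫ ω, g ω ∂μ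
  have : covar μ f g = ∫ ω, (f ω * g ω - a * g ω - b * f ω + a * b) ∂μ := by
    unfold covar; congr 1; ext ω; ring
  rw [this, integral_add, integral_sub, integral_sub, integral_const_mul, integral_const_mul,
    integral_const]
  · simp [a, b]; ring
  · exact hfg
  · exact hg1.const_mul a
  · exact (hfg.sub (hg1.const_mul a))
  · exact hf1.const_mul b
  · exact (hfg.sub (hg1.const_mul a)).sub (hf1.const_mul b)
  · exact integrable_const _

lemma covar_comm (f g : Ω → ℝ) : covar μ f g = covar μ g f := by
  unfold covar; congr 1; ext ω; ring

lemma variance_eq_covar {f : Ω → ℝ} (hf : MemLp f 2 μ) :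
    variance f μ = covar μ f f := by
  rw [covar_eq hf hf, variance_eq_sub hf]
  simp [sq]

lemma covar_sum_left {ι : Type*} (s : Finset ι) (f : ι → Ω → ℝ) (g : Ω → ℝ)
    (hf : ∀ i, MemLp (f i) 2 μ) (hg : MemLp g 2 μ) :
    covar μ (fun ω => ∑ i ∈ s, f i ω) g = ∑ i ∈ s, covar μ (f i) g := by
  have hs : MemLp (fun ω => ∑ i ∈ s, f i ω) 2 μ := by
    have h := memLp_finset_sum' (μ := μ) (p := 2) s (fun i _ => hf i)
    rwa [show (∑ i ∈ s, f i) = fun ω => ∑ i ∈ s, f i ω from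
      funext fun ω => Finset.sum_apply ω s f] at h
  rw [covar_eq hs hg]
  have h1 : (∫ ω, (∑ i ∈ s, f i ω) * g ω ∂μ) = ∑ i ∈ s, ∫ ω, f i ω * g ω ∂μ := by
    rw [← integral_finset_sum s (fun i _ => int_mul (hf i) hg)]
    congr 1; ext ω; rw [sum_mul]
  have h2 : (∫ ω, (∑ i ∈ s, f i ω) ∂μ) = ∑ i ∈ s, ∫ ω, f i ω ∂μ :=
    integral_finset_sum s (fun i _ => (hf i).integrable one_le_two)
  rw [h1, h2, sum_mul, ← Finset.sum_sub_distrib]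
  exact Finset.sum_congr rfl fun i _ => (covar_eq (hf i) hg).symm

lemma covar_sum_right {ι : Type*} (s : Finset ι) (f : Ω → ℝ) (g : ι → Ω → ℝ)
    (hf : MemLp f 2 μ) (hg : ∀ i, MemLp (g i) 2 μ) :
    covar μ f (fun ω => ∑ i ∈ s, g i ω) = ∑ i ∈ s, covar μ f (g i) := by
  rw [covar_comm, covar_sum_left s g f hg hf]
  exact Finset.sum_congr rfl fun i _ => covar_comm _ _

lemma variance_sum_eq {ι : Type*} (s : Finset ι) (f : ι → Ω → ℝ)
    (hf : ∀ i, MemLp (f i) 2 μ) :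
    variance (fun ω => ∑ i ∈ s, f i ω) μ = ∑ a ∈ s, ∑ b ∈ s, covar μ (f a) (f b) := by
  have hs : MemLp (fun ω => ∑ i ∈ s, f i ω) 2 μ := by
    have h := memLp_finset_sum' (μ := μ) (p := 2) s (fun i _ => hf i)
    rwa [show (∑ i ∈ s, f i) = fun ω => ∑ i ∈ s, f i ω from
      funext fun ω => Finset.sum_apply ω s f] at h
  rw [variance_eq_covar hs, covar_sum_left s f _ hf hs]
  exact Finset.sum_congr rfl fun a _ => covar_sum_right s (f a) f (hf a) hf

lemma gauss_real (n : ℕ) : ∑ m ∈ range n, ((m : ℝ) + 1) = n * (n + 1) / 2 := by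
  induction n with
  | zero => simp
  | succ n ih => rw [Finset.sum_range_succ, ih]; push_cast; ring

lemma sum_choose_inv {α : Type*} [DecidableEq α] (t : Finset α) (n : ℕ) (ht : t.card = n) :
    ∑ u ∈ t.powerset, ((n.choose u.card : ℝ))⁻¹ = n + 1 := by
  rw [Finset.sum_powerset_apply_card (fun m => ((n.choose m : ℝ))⁻¹), ht]
  have key : ∀ m ∈ range (n + 1), n.choose m • ((n.choose m : ℝ))⁻¹ = 1 := by
    intro m hm
    rw [mem_range, Nat.lt_succ_iff] at hm
    have h0 : (n.choose m : ℝ) ≠ 0 := by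
      exact_mod_cast (Nat.choose_pos hm).ne'
    rw [nsmul_eq_mul, mul_inv_cancel₀ h0]
  rw [Finset.sum_congr rfl key, Finset.sum_const, card_range, nsmul_eq_mul, mul_one]
  push_cast; ring

lemma sum_choose_inv_mem {α : Type*} [DecidableEq α] (t : Finset α) (n : ℕ) (ht : t.card = n)
    {k : α} (hk : k ∈ t) :
    ∑ u ∈ t.powerset with k ∈ u, ((n.choose u.card : ℝ))⁻¹ = (n + 1) / 2 := by
  have hn : 1 ≤ n := by
    rw [← ht]; exact Finset.card_pos.mpr ⟨k, hk⟩
  have hbij : ∑ u ∈ t.powerset with k ∈ u, ((n.choose u.card : ℝ))⁻¹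
      = ∑ v ∈ (t.erase k).powerset, ((n.choose (v.card + 1) : ℝ))⁻¹ := by
    refine Finset.sum_nbij' (fun u => u.erase k) (fun v => insert k v) ?_ ?_ ?_ ?_ ?_
    · intro u hu
      simp only [mem_filter, mem_powerset] at hu
      exact mem_powerset.mpr (Finset.erase_subset_erase k hu.1)
    · intro v hv
      simp only [mem_powerset] at hv
      simp only [mem_filter, mem_powerset]
      refine ⟨?_, mem_insert_self k v⟩
      exact Finset.insert_subset hk (hv.trans (Finset.erase_subset k t))
    · intro u hu
      simp only [mem_filter] at hu
      exact Finset.insert_erase hu.2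
    · intro v hv
      simp only [mem_powerset] at hv
      exact Finset.erase_insert (fun hkv => (Finset.notMem_erase k t) (hv hkv))
    · intro u hu
      simp only [mem_filter] at hu
      rw [Finset.card_erase_of_mem hu.2, Nat.sub_add_cancel (Finset.card_pos.mpr ⟨k, hu.2⟩)]
  rw [hbij, Finset.sum_powerset_apply_card (fun m => ((n.choose (m + 1) : ℝ))⁻¹),
    Finset.card_erase_of_mem hk, ht]
  have key : ∀ m ∈ range (n - 1 + 1),
      ((n-1).choose m) • ((n.choose (m + 1) : ℝ))⁻¹ = ((m : ℝ) + 1) / n := by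
    intro m hm
    rw [mem_range, Nat.lt_succ_iff] at hm
    have h1 : n.choose (m+1) * (m+1) = n * (n-1).choose m := by
      have := Nat.add_one_mul_choose_eq (n-1) m
      rw [Nat.sub_add_cancel hn] at this
      omega
    have hc : (0:ℝ) < n.choose (m+1) := by
      exact_mod_cast Nat.choose_pos (by omega)
    have hn' : (0:ℝ) < n := by exact_mod_cast hn
    have h1' : ((n.choose (m+1) : ℝ)) * ((m : ℝ) + 1) = (n : ℝ) * ((n-1).choose m : ℝ) := by
      exact_mod_cast h1
    rw [nsmul_eq_mul, inv_eq_one_div, mul_one_div, div_eq_div_iff hc.ne' hn'.ne']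
    linear_combination -h1'
  rw [Finset.sum_congr rfl key, ← Finset.sum_div, gauss_real, Nat.sub_add_cancel hn]
  have hn' : (0:ℝ) < n := by exact_mod_cast hn
  field_simp

end Aux

/-- For the game `val u = Var(∑_{j∈u} x_j)` built from (possibly dependent)
square-integrable random variables, the Shapley value of player `j` is
`Cov(x_j, S)` where `S = ∑_{k=1}^d x_k`. -/
theorem shapley_variance_of_sum
    {Ω : Type*} [MeasurableSpace Ω] (μ : Measure Ω) [IsProbabilityMeasure μ]
    (d : ℕ) (x : Fin d → Ω → ℝ) (hx : ∀ j, Measurable (x j))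
    (hx2 : ∀ j, MemLp (x j) 2 μ) (j : Fin d) :
    shapley (fun u => variance (fun ω => ∑ k ∈ u, x k ω) μ) j
      = covar μ (x j) (fun ω => ∑ k, x k ω) := by
  classical
  set c : Fin d → Fin d → ℝ := fun a b => covar μ (x a) (x b) with hc
  set t : Finset (Fin d) := Finset.univ.erase j with hct
  have hd : 1 ≤ d := j.pos
  have hdR : (0:ℝ) < d := by exact_mod_cast hd
  have htcard : t.card = d - 1 := by
    rw [hct, card_erase_of_mem (mem_univ j), card_univ, Fintype.card_fin]
  have hn1 : ((d - 1 : ℕ) : ℝ) + 1 = d := by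
    have : d - 1 + 1 = d := Nat.sub_add_cancel hd
    exact_mod_cast congrArg (Nat.cast : ℕ → ℝ) this
  have hval : ∀ u : Finset (Fin d),
      variance (fun ω => ∑ k ∈ u, x k ω) μ = ∑ a ∈ u, ∑ b ∈ u, c a b :=
    fun u => variance_sum_eq u x hx2
  have hdiff : ∀ u ∈ t.powerset,
      variance (fun ω => ∑ k ∈ insert j u, x k ω) μ
        - variance (fun ω => ∑ k ∈ u, x k ω) μ = c j j + 2 * ∑ k ∈ u, c j k := by
    intro u hu
    have hj : j ∉ u := fun h => (Finset.notMem_erase j Finset.univ) (mem_powerset.mp hu h)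
    rw [hval, hval, Finset.sum_insert hj, Finset.sum_insert hj]
    have h2 : ∑ a ∈ u, ∑ b ∈ insert j u, c a b
        = ∑ a ∈ u, (c a j + ∑ b ∈ u, c a b) :=
      Finset.sum_congr rfl fun a _ => Finset.sum_insert hj
    rw [h2, Finset.sum_add_distrib]
    have hsym : ∑ a ∈ u, c a j = ∑ a ∈ u, c j a :=
      Finset.sum_congr rfl fun a _ => covar_comm _ _
    rw [hsym]; ring
  have hA : ∑ u ∈ t.powerset, (((d-1).choose u.card : ℝ))⁻¹ = ((d-1:ℕ) : ℝ) + 1 :=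
    sum_choose_inv t (d-1) htcard
  have hswap : ∑ u ∈ t.powerset, ∑ k ∈ u, (((d-1).choose u.card : ℝ))⁻¹ * c j k
      = ∑ k ∈ t, ∑ u ∈ t.powerset with k ∈ u, (((d-1).choose u.card : ℝ))⁻¹ * c j k := by
    have h1 : ∀ u ∈ t.powerset, ∑ k ∈ u, (((d-1).choose u.card : ℝ))⁻¹ * c j k
        = ∑ k ∈ t, if k ∈ u then (((d-1).choose u.card : ℝ))⁻¹ * c j k else 0 := by
      intro u hu
      rw [← Finset.sum_filter]
      congr 1
      rw [Finset.filter_mem_eq_inter, Finset.inter_eq_right.mpr (mem_powerset.mp hu)]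
    rw [Finset.sum_congr rfl h1, Finset.sum_comm]
    exact Finset.sum_congr rfl fun k _ => (Finset.sum_filter _ _).symm
  have hB : ∀ k ∈ t, ∑ u ∈ t.powerset with k ∈ u, (((d-1).choose u.card : ℝ))⁻¹ * c j k
      = (d / 2) * c j k := by
    intro k hk
    rw [← Finset.sum_mul, sum_choose_inv_mem t (d-1) htcard hk, hn1]
  have hRHS : covar μ (x j) (fun ω => ∑ k, x k ω) = ∑ k, c j k :=
    covar_sum_right Finset.univ (x j) x (hx2 j) hx2
  rw [hRHS]
  unfold shapley
  have hsum : ∑ u ∈ (Finset.univ.erase j).powerset,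
      (((d-1).choose u.card : ℝ))⁻¹ *
        ((fun u => variance (fun ω => ∑ k ∈ u, x k ω) μ) (insert j u)
          - (fun u => variance (fun ω => ∑ k ∈ u, x k ω) μ) u)
      = ∑ u ∈ t.powerset, (((d-1).choose u.card : ℝ))⁻¹ * (c j j + 2 * ∑ k ∈ u, c j k) := by
    refine Finset.sum_congr rfl fun u hu => ?_
    simp only
    rw [hdiff u hu]
  rw [hsum]
  have hexp : ∑ u ∈ t.powerset, (((d-1).choose u.card : ℝ))⁻¹ * (c j j + 2 * ∑ k ∈ u, c j k)
      = (∑ u ∈ t.powerset, (((d-1).choose u.card : ℝ))⁻¹) * c j j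
        + 2 * ∑ u ∈ t.powerset, ∑ k ∈ u, (((d-1).choose u.card : ℝ))⁻¹ * c j k := by
    have hterm : ∀ u ∈ t.powerset,
        (((d-1).choose u.card : ℝ))⁻¹ * (c j j + 2 * ∑ k ∈ u, c j k)
          = (((d-1).choose u.card : ℝ))⁻¹ * c j j
            + 2 * ∑ k ∈ u, (((d-1).choose u.card : ℝ))⁻¹ * c j k := by
      intro u hu
      rw [← Finset.mul_sum]
      ring
    rw [Finset.sum_congr rfl hterm, Finset.sum_add_distrib, ← Finset.sum_mul, ← Finset.mul_sum]
  rw [hexp, hswap, Finset.sum_congr rfl hB, hA, hn1, ← Finset.mul_sum]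
  have hsplit : (∑ k, c j k) = c j j + ∑ k ∈ t, c j k :=
    (Finset.add_sum_erase _ (c j) (mem_univ j)).symm
  rw [hsplit]
  generalize c j j = A
  generalize ∑ k ∈ t, c j k = S
  field_simp
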